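/- Let H be a finite hypergraph on a vertex set V of size n, containing all singletons as edges, with weights w: H → ℝ≥0 satisfying w({v}) ≤ 1 for every v. Define σ = min over edge-covers F ⊆ H (with ∪F = V) of (1/n) Σ_{A∈F} w(A), and σ* = min over fractional edge-covers x: H → ℝ≥0 (with Σ_{A∋v} x_A ≥ 1 for all v) of (1/n) Σ_A w(A) x_A. Then σ* ≤ σ ≤ σ*(2 + ln(1/σ*)). -/

import Mathlib

open Finset

/-- The optimum `σ(H,w)` of the weighted edge-cover problem. -/
noncomputable def hySigma {V : Type*} [Fintype V] [DecidableEq V]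
    (H : Finset (Finset V)) (w : Finset V → ℝ) : ℝ :=
  sInf {c : ℝ | ∃ F ⊆ H, (∀ v : V, ∃ A ∈ F, v ∈ A) ∧
      c = (∑ A ∈ F, w A) / (Fintype.card V : ℝ)}

/-- The optimum `σ*(H,w)` of the fractional edge-cover problem. -/
noncomputable def hySigmaStar {V : Type*} [Fintype V] [DecidableEq V]
    (H : Finset (Finset V)) (w : Finset V → ℝ) : ℝ :=
  sInf {c : ℝ | ∃ x : Finset V → ℝ, (∀ A, 0 ≤ x A) ∧
      (∀ v : V, 1 ≤ ∑ A ∈ H.filter (fun A => v ∈ A), x A) ∧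
      c = (∑ A ∈ H, w A * x A) / (Fintype.card V : ℝ)}


noncomputable def phiFn (c : ℝ) : ℝ := 2 * c - c * Real.log c

lemma phiFn_continuous : Continuous phiFn :=
  (continuous_const.mul continuous_id).sub Real.continuous_mul_log

lemma phiFn_monotoneOn : MonotoneOn phiFn (Set.Icc 0 (Real.exp 1)) := by
  apply (strictMonoOn_of_deriv_pos (convex_Icc _ _) phiFn_continuous.continuousOn ?_).monotoneOn
  intro c hc
  rw [interior_Icc] at hc
  have hc0 : c ≠ 0 := ne_of_gt hc.1
  have hd : HasDerivAt phiFn (2 - (Real.log c + 1)) c := by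
    have h1 : HasDerivAt (fun x : ℝ => 2 * x) 2 c := by
      simpa using (hasDerivAt_id c).const_mul 2
    exact h1.sub (Real.hasDerivAt_mul_log hc0)
  rw [hd.deriv]
  have hlt : Real.log c < 1 := by
    have := Real.log_lt_log hc.1 hc.2
    simpa [Real.log_exp] using this
  linarith

noncomputable def Gfun (W t : ℝ) : ℝ := if t ≤ W then t else 2 * W + W * Real.log (t / W)

lemma Gfun_step {W m k : ℝ} (hW : 0 ≤ W) (hWm : W < m) (hk1 : 1 ≤ k) (hkm : k ≤ m) :
    W * k / m + Gfun W (m - k) ≤ Gfun W m := by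
  have hm0 : 0 < m := lt_of_le_of_lt hW hWm
  simp only [Gfun]
  rw [if_neg (not_le.mpr hWm)]
  rcases eq_or_lt_of_le hW with hW0 | hW0
  · rw [← hW0]
    split_ifs with h
    · have : (0:ℝ) * k / m = 0 := by ring
      linarith
    · simp
  · have hmW : 1 ≤ m / W := (one_le_div hW0).mpr hWm.le
    split_ifs with h
    · have h1 : W * k / m ≤ W := by
        rw [div_le_iff₀ hm0]; nlinarith
      have h2 : 0 ≤ Real.log (m / W) := Real.log_nonneg hmW
      nlinarith
    · push_neg at h
      have hmk0 : 0 < m - k := lt_trans hW0 h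
      have hfrac : (m - k) / m - 1 = -(k / m) := by field_simp; ring
      have hlog : k / m ≤ Real.log m - Real.log (m - k) := by
        have h3 := Real.log_le_sub_one_of_pos (div_pos hmk0 hm0)
        rw [Real.log_div (ne_of_gt hmk0) (ne_of_gt hm0), hfrac] at h3
        linarith
      rw [Real.log_div (ne_of_gt hmk0) (ne_of_gt hW0),
          Real.log_div (ne_of_gt hm0) (ne_of_gt hW0)]
      have h4 : W * (k / m) ≤ W * (Real.log m - Real.log (m - k)) :=
        mul_le_mul_of_nonneg_left hlog hW0.le
      have h5 : W * k / m = W * (k / m) := by ring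
      nlinarith


lemma greedy_cover {V : Type*} [Fintype V] [DecidableEq V]
    (H : Finset (Finset V)) (w : Finset V → ℝ)
    (hsing : ∀ v : V, {v} ∈ H) (hw0 : ∀ A ∈ H, 0 ≤ w A) (hw1 : ∀ v : V, w {v} ≤ 1)
    (x : Finset V → ℝ) (hx0 : ∀ A, 0 ≤ x A)
    (hxc : ∀ v : V, 1 ≤ ∑ A ∈ H.filter (fun A => v ∈ A), x A) :
    ∀ (n : ℕ) (U : Finset V), U.card ≤ n →
      ∃ F ⊆ H, (∀ v ∈ U, ∃ A ∈ F, v ∈ A) ∧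
        ∑ A ∈ F, w A ≤ Gfun (∑ A ∈ H, w A * x A) (U.card : ℝ) := by
  set W := ∑ A ∈ H, w A * x A with hWdef
  have hW0 : 0 ≤ W := Finset.sum_nonneg fun A hA => mul_nonneg (hw0 A hA) (hx0 A)
  intro n
  induction n with
  | zero =>
    intro U hU
    have hUe : U = ∅ := Finset.card_eq_zero.mp (Nat.le_zero.mp hU)
    refine ⟨∅, Finset.empty_subset _, by simp [hUe], ?_⟩
    simp [Gfun, hUe, hW0]
  | succ n ih =>
    intro U hU
    by_cases hcase : (U.card : ℝ) ≤ W
    · -- singleton cover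
      refine ⟨U.image (fun v => ({v} : Finset V)), ?_, ?_, ?_⟩
      · intro A hA
        obtain ⟨v, _, rfl⟩ := Finset.mem_image.mp hA
        exact hsing v
      · intro v hv
        exact ⟨{v}, Finset.mem_image_of_mem _ hv, Finset.mem_singleton_self v⟩
      · have h1 : ∀ A ∈ U.image (fun v => ({v} : Finset V)), w A ≤ 1 := by
          intro A hA
          obtain ⟨v, _, rfl⟩ := Finset.mem_image.mp hA
          exact hw1 v
        calc ∑ A ∈ U.image (fun v => ({v} : Finset V)), w A
            ≤ ∑ _A ∈ U.image (fun v => ({v} : Finset V)), (1:ℝ) := Finset.sum_le_sum h1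
          _ = ((U.image (fun v => ({v} : Finset V))).card : ℝ) := by simp
          _ ≤ (U.card : ℝ) := by exact_mod_cast Finset.card_image_le
          _ = Gfun W (U.card : ℝ) := by rw [Gfun, if_pos hcase]
    · -- greedy step
      push_neg at hcase
      have hm0 : (0:ℝ) < (U.card : ℝ) := lt_of_le_of_lt hW0 hcase
      have hUne : U.Nonempty := Finset.card_pos.mp (by exact_mod_cast hm0)
      obtain ⟨u, hu⟩ := hUne
      have hne' : (H.filter (fun A => (A ∩ U).Nonempty)).Nonempty := by
        refine ⟨{u}, Finset.mem_filter.mpr ⟨hsing u, ⟨u, ?_⟩⟩⟩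
        exact Finset.mem_inter.mpr ⟨Finset.mem_singleton_self u, hu⟩
      obtain ⟨A, hA', hAmin⟩ :=
        Finset.exists_min_image _ (fun A => w A / ((A ∩ U).card : ℝ)) hne'
      have hAH : A ∈ H := (Finset.mem_filter.mp hA').1
      have hAU : (A ∩ U).Nonempty := (Finset.mem_filter.mp hA').2
      have hAk : (0:ℝ) < ((A ∩ U).card : ℝ) := by exact_mod_cast Finset.card_pos.mpr hAU
      -- counting inequality
      have count : (U.card : ℝ) ≤ ∑ B ∈ H, x B * ((B ∩ U).card : ℝ) := by
        have h2 : ∀ v ∈ U, (1:ℝ) ≤ ∑ B ∈ H, if v ∈ B then x B else 0 := by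
          intro v _
          have := hxc v
          rwa [Finset.sum_filter] at this
        calc (U.card : ℝ) = ∑ _v ∈ U, (1:ℝ) := by simp
          _ ≤ ∑ v ∈ U, ∑ B ∈ H, (if v ∈ B then x B else 0) := Finset.sum_le_sum h2
          _ = ∑ B ∈ H, ∑ v ∈ U, (if v ∈ B then x B else 0) := Finset.sum_comm
          _ = ∑ B ∈ H, x B * ((B ∩ U).card : ℝ) := by
              refine Finset.sum_congr rfl fun B _ => ?_
              rw [← Finset.sum_filter]
              rw [Finset.sum_const, Finset.filter_mem_eq_inter]
              rw [nsmul_eq_mul, Finset.inter_comm, mul_comm]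
      -- min property
      have hAbound : w A * (U.card : ℝ) ≤ W * ((A ∩ U).card : ℝ) := by
        have hwA : 0 ≤ w A := hw0 A hAH
        have step2 : ∀ B ∈ H,
            x B * (w A * ((B ∩ U).card : ℝ)) ≤ x B * (w B * ((A ∩ U).card : ℝ)) := by
          intro B hB
          refine mul_le_mul_of_nonneg_left ?_ (hx0 B)
          by_cases hBU : (B ∩ U).Nonempty
          · have hBk : (0:ℝ) < ((B ∩ U).card : ℝ) := by
              exact_mod_cast Finset.card_pos.mpr hBU
            have hmin := hAmin B (Finset.mem_filter.mpr ⟨hB, hBU⟩)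
            rw [div_le_div_iff₀ hAk hBk] at hmin
            linarith
          · have hz : (B ∩ U).card = 0 := by
              simp [Finset.not_nonempty_iff_eq_empty.mp hBU]
            rw [hz]
            have := hw0 B hB
            push_cast
            nlinarith
        calc w A * (U.card : ℝ) ≤ w A * ∑ B ∈ H, x B * ((B ∩ U).card : ℝ) :=
              mul_le_mul_of_nonneg_left count hwA
          _ = ∑ B ∈ H, x B * (w A * ((B ∩ U).card : ℝ)) := by
              rw [Finset.mul_sum]; exact Finset.sum_congr rfl fun B _ => by ring
          _ ≤ ∑ B ∈ H, x B * (w B * ((A ∩ U).card : ℝ)) := Finset.sum_le_sum step2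
          _ = W * ((A ∩ U).card : ℝ) := by
              rw [hWdef, Finset.sum_mul]; exact Finset.sum_congr rfl fun B _ => by ring
      have hwAle : w A ≤ W * ((A ∩ U).card : ℝ) / (U.card : ℝ) := by
        rw [le_div_iff₀ hm0]; linarith
      -- recurse
      have hsumcard : (U \ A).card + (U ∩ A).card = U.card :=
        Finset.card_sdiff_add_card_inter U A
      have hUA : U ∩ A = A ∩ U := Finset.inter_comm U A
      rw [hUA] at hsumcard
      have hk1 : 1 ≤ (A ∩ U).card := Finset.card_pos.mpr hAU
      have hUn : (U \ A).card ≤ n := by omega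
      obtain ⟨F', hF'H, hF'cov, hF'sum⟩ := ih (U \ A) hUn
      refine ⟨insert A F', Finset.insert_subset hAH hF'H, ?_, ?_⟩
      · intro v hv
        by_cases hvA : v ∈ A
        · exact ⟨A, Finset.mem_insert_self A F', hvA⟩
        · obtain ⟨B, hB, hvB⟩ := hF'cov v (Finset.mem_sdiff.mpr ⟨hv, hvA⟩)
          exact ⟨B, Finset.mem_insert_of_mem hB, hvB⟩
      · have hins : ∑ B ∈ insert A F', w B ≤ w A + ∑ B ∈ F', w B := by
          by_cases hAF : A ∈ F'
          · rw [Finset.insert_eq_self.mpr hAF]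
            linarith [hw0 A hAH]
          · rw [Finset.sum_insert hAF]
        have hcast : ((U \ A).card : ℝ) = (U.card : ℝ) - ((A ∩ U).card : ℝ) := by
          push_cast [← hsumcard]
          ring
        have hstep := @Gfun_step W (U.card : ℝ) ((A ∩ U).card : ℝ) hW0 hcase
          (by exact_mod_cast hk1)
          (by exact_mod_cast (Finset.card_le_card (Finset.inter_subset_right)))
        rw [← hcast] at hstep
        calc ∑ B ∈ insert A F', w B ≤ w A + ∑ B ∈ F', w B := hins
          _ ≤ W * ((A ∩ U).card : ℝ) / (U.card : ℝ) + Gfun W (((U \ A).card : ℝ)) :=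
              add_le_add hwAle hF'sum
          _ ≤ Gfun W (U.card : ℝ) := hstep

lemma sigma_le_phi {V : Type*} [Fintype V] [DecidableEq V] [Nonempty V]
    (H : Finset (Finset V)) (w : Finset V → ℝ)
    (hsing : ∀ v : V, {v} ∈ H) (hw0 : ∀ A ∈ H, 0 ≤ w A) (hw1 : ∀ v : V, w {v} ≤ 1)
    (x : Finset V → ℝ) (hx0 : ∀ A, 0 ≤ x A)
    (hxc : ∀ v : V, 1 ≤ ∑ A ∈ H.filter (fun A => v ∈ A), x A) :
    hySigma H w ≤ phiFn (min ((∑ A ∈ H, w A * x A) / (Fintype.card V : ℝ)) 1) := by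
  have hnR : (0:ℝ) < ((Fintype.card V : ℕ) : ℝ) := by exact_mod_cast Fintype.card_pos
  set W := ∑ A ∈ H, w A * x A with hWdef
  have hW0 : 0 ≤ W := Finset.sum_nonneg fun A hA => mul_nonneg (hw0 A hA) (hx0 A)
  obtain ⟨F, hFH, hFcov, hFsum⟩ :=
    greedy_cover H w hsing hw0 hw1 x hx0 hxc (Fintype.card V) Finset.univ (by simp)
  rw [Finset.card_univ] at hFsum
  have hcov : ∀ v : V, ∃ A ∈ F, v ∈ A := fun v => hFcov v (Finset.mem_univ v)
  have hbdd : BddBelow {c : ℝ | ∃ F ⊆ H, (∀ v : V, ∃ A ∈ F, v ∈ A) ∧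
      c = (∑ A ∈ F, w A) / (Fintype.card V : ℝ)} := by
    refine ⟨0, ?_⟩
    rintro c ⟨F', hF'H, -, rfl⟩
    exact div_nonneg (Finset.sum_nonneg fun A hA => hw0 A (hF'H hA)) hnR.le
  have h1 : hySigma H w ≤ (∑ A ∈ F, w A) / (Fintype.card V : ℝ) :=
    csInf_le hbdd ⟨F, hFH, hcov, rfl⟩
  have h3 : (∑ A ∈ F, w A) / (Fintype.card V : ℝ) ≤
      Gfun W (Fintype.card V : ℝ) / (Fintype.card V : ℝ) := by gcongr
  have h2 : Gfun W (Fintype.card V : ℝ) / (Fintype.card V : ℝ) ≤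
      phiFn (min (W / (Fintype.card V : ℝ)) 1) := by
    rw [Gfun]
    split_ifs with hc
    · have hmin : min (W / (Fintype.card V : ℝ)) 1 = 1 :=
        min_eq_right ((one_le_div hnR).mpr hc)
      rw [hmin, div_self (ne_of_gt hnR)]
      have : phiFn 1 = 2 := by simp [phiFn]
      rw [this]; norm_num
    · push_neg at hc
      have hmin : min (W / (Fintype.card V : ℝ)) 1 = W / (Fintype.card V : ℝ) :=
        min_eq_left ((div_le_one hnR).mpr hc.le)
      rw [hmin]
      rcases eq_or_lt_of_le hW0 with h0 | hWpos
      · rw [← h0]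
        simp [phiFn]
      · have hlog : Real.log ((Fintype.card V : ℝ) / W) =
            -Real.log (W / (Fintype.card V : ℝ)) := by
          rw [Real.log_div (ne_of_gt hnR) (ne_of_gt hWpos),
              Real.log_div (ne_of_gt hWpos) (ne_of_gt hnR)]
          ring
        rw [hlog, phiFn]
        apply le_of_eq
        field_simp
        ring
  exact h1.trans (h3.trans h2)

theorem stmt5 {V : Type*} [Fintype V] [DecidableEq V] [Nonempty V]
    (H : Finset (Finset V)) (w : Finset V → ℝ)
    (hsing : ∀ v : V, {v} ∈ H)
    (hw0 : ∀ A ∈ H, 0 ≤ w A)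
    (hw1 : ∀ v : V, w {v} ≤ 1) :
    hySigmaStar H w ≤ hySigma H w ∧
    hySigma H w ≤ hySigmaStar H w * (2 + Real.log (1 / hySigmaStar H w)) := by
  have hnpos : (0:ℝ) < ((Fintype.card V : ℕ) : ℝ) := by exact_mod_cast Fintype.card_pos
  set Sig := {c : ℝ | ∃ F ⊆ H, (∀ v : V, ∃ A ∈ F, v ∈ A) ∧
      c = (∑ A ∈ F, w A) / (Fintype.card V : ℝ)} with hSig
  set Sstar := {c : ℝ | ∃ x : Finset V → ℝ, (∀ A, 0 ≤ x A) ∧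
      (∀ v : V, 1 ≤ ∑ A ∈ H.filter (fun A => v ∈ A), x A) ∧
      c = (∑ A ∈ H, w A * x A) / (Fintype.card V : ℝ)} with hSstar
  have hSigdef : hySigma H w = sInf Sig := rfl
  have hStardef : hySigmaStar H w = sInf Sstar := rfl
  -- indicator construction
  have hSsub : ∀ (F : Finset (Finset V)), F ⊆ H → (∀ v : V, ∃ A ∈ F, v ∈ A) →
      ((∑ A ∈ F, w A) / (Fintype.card V : ℝ)) ∈ Sstar := by
    intro F hFH hcov
    refine ⟨fun A => if A ∈ F then 1 else 0,
      fun A => by dsimp only; split_ifs <;> norm_num, ?_, ?_⟩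
    · intro v
      dsimp only
      obtain ⟨A, hAF, hvA⟩ := hcov v
      have hmem : A ∈ H.filter (fun B => v ∈ B) := Finset.mem_filter.mpr ⟨hFH hAF, hvA⟩
      calc (1:ℝ) = (if A ∈ F then (1:ℝ) else 0) := (if_pos hAF).symm
        _ ≤ ∑ B ∈ H.filter (fun B => v ∈ B), (if B ∈ F then (1:ℝ) else 0) :=
            Finset.single_le_sum (f := fun B => if B ∈ F then (1:ℝ) else 0)
              (fun B _ => by split_ifs <;> norm_num) hmem
    · dsimp only
      have e1 : ∀ A ∈ H, w A * (if A ∈ F then (1:ℝ) else 0) = if A ∈ F then w A else 0 :=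
        fun A _ => by split_ifs <;> ring
      rw [Finset.sum_congr rfl e1, ← Finset.sum_filter, Finset.filter_mem_eq_inter,
        Finset.inter_eq_right.mpr hFH]
  -- singleton cover
  have hF0H : Finset.univ.image (fun v : V => ({v} : Finset V)) ⊆ H := by
    intro A hA
    obtain ⟨v, -, rfl⟩ := Finset.mem_image.mp hA
    exact hsing v
  have hF0cov : ∀ v : V, ∃ A ∈ Finset.univ.image (fun v : V => ({v} : Finset V)), v ∈ A :=
    fun v => ⟨{v}, Finset.mem_image_of_mem _ (Finset.mem_univ v), Finset.mem_singleton_self v⟩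
  have hF0sum : ∑ A ∈ Finset.univ.image (fun v : V => ({v} : Finset V)), w A ≤
      (Fintype.card V : ℝ) := by
    calc ∑ A ∈ Finset.univ.image (fun v : V => ({v} : Finset V)), w A
        ≤ ∑ _A ∈ Finset.univ.image (fun v : V => ({v} : Finset V)), (1:ℝ) := by
          refine Finset.sum_le_sum ?_
          intro A hA
          obtain ⟨v, -, rfl⟩ := Finset.mem_image.mp hA
          exact hw1 v
      _ = ((Finset.univ.image (fun v : V => ({v} : Finset V))).card : ℝ) := by simp
      _ ≤ (Fintype.card V : ℝ) := by
          rw [← Finset.card_univ]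
          exact_mod_cast Finset.card_image_le
  have hbddS : BddBelow Sig := by
    refine ⟨0, ?_⟩
    rintro c ⟨F', hF'H, -, rfl⟩
    exact div_nonneg (Finset.sum_nonneg fun A hA => hw0 A (hF'H hA)) hnpos.le
  have hbddStar : BddBelow Sstar := by
    refine ⟨0, ?_⟩
    rintro c ⟨x, hx0, -, rfl⟩
    exact div_nonneg (Finset.sum_nonneg fun A hA => mul_nonneg (hw0 A hA) (hx0 A)) hnpos.le
  have hSne : Sig.Nonempty := ⟨_, _, hF0H, hF0cov, rfl⟩
  have hStarne : Sstar.Nonempty := ⟨_, hSsub _ hF0H hF0cov⟩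
  constructor
  · rw [hSigdef, hStardef]
    refine le_csInf hSne ?_
    rintro c ⟨F, hFH, hcov, rfl⟩
    exact csInf_le hbddStar (hSsub F hFH hcov)
  · set s := hySigmaStar H w with hs
    have hs0 : 0 ≤ s := by
      rw [hStardef]
      refine le_csInf hStarne ?_
      rintro c ⟨x, hx0, -, rfl⟩
      exact div_nonneg (Finset.sum_nonneg fun A hA => mul_nonneg (hw0 A hA) (hx0 A)) hnpos.le
    have hs1 : s ≤ 1 := by
      rw [hStardef]
      refine le_trans (csInf_le hbddStar (hSsub _ hF0H hF0cov)) ?_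
      rw [div_le_one hnpos]
      exact hF0sum
    have hmain : hySigma H w ≤ phiFn s := by
      refine le_of_forall_pos_le_add ?_
      intro ε hε
      obtain ⟨δ, hδ0, hδ⟩ := Metric.continuousAt_iff.mp
        (phiFn_continuous.continuousAt : ContinuousAt phiFn s) ε hε
      have hlt : sInf Sstar < s + δ := by
        rw [← hStardef]; linarith
      obtain ⟨c, hcS, hclt⟩ := exists_lt_of_csInf_lt hStarne hlt
      have hsc : s ≤ c := by
        rw [hStardef]; exact csInf_le hbddStar hcS
      obtain ⟨x, hx0, hxc, hceq⟩ := hcS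
      have hσ := sigma_le_phi H w hsing hw0 hw1 x hx0 hxc
      rw [← hceq] at hσ
      have hst : s ≤ min c 1 := le_min hsc hs1
      have htc : min c 1 ≤ c := min_le_left _ _
      have hdist : dist (min c 1) s < δ := by
        rw [Real.dist_eq, abs_of_nonneg (by linarith)]
        linarith
      have hd2 := hδ hdist
      rw [Real.dist_eq] at hd2
      have h2 : phiFn (min c 1) - phiFn s < ε := (abs_lt.mp hd2).2
      linarith
    rcases eq_or_lt_of_le hs0 with h0 | h0
    · rw [← h0] at hmain ⊢
      simpa [phiFn] using hmain
    · have heq : s * (2 + Real.log (1/s)) = phiFn s := by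
        rw [one_div, Real.log_inv, phiFn]; ring
      rw [heq]
      exact hmain
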